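/- Define θ(k, ξ) = ((k² − 1)/(4k)) ξ − 2k(k² − 1)/(k² + 1)². Then for all real t, ξ and all k ∈ ℂ with k ≠ 0 and k² ≠ −1, writing a = Re k and b = Im k, one has Re(2 i t θ(k, ξ)) = −2 t b [ (ξ/4)(1 + (a² + b²)^{−1}) + 2 ( (a²+b²)³ − 2(a²+b²)² − (3a² − b²)(1 + a² + b²) − 2(a²+b²) + 1 ) / ( ((a² − b² + 1)² + 4a²b²)² ) ]. -/
import Mathlib


open Complex

private lemma re_part1 (t ξ : ℝ) (k : ℂ) (hk : k ≠ 0) :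
    (2 * Complex.I * (t : ℂ) * (((k ^ 2 - 1) / (4 * k)) * (ξ : ℂ))).re
    = -2 * t * k.im * (ξ / 4 * (1 + (k.re ^ 2 + k.im ^ 2)⁻¹)) := by
  have hab : k.re ^ 2 + k.im ^ 2 ≠ 0 := by
    have := Complex.normSq_pos.mpr hk
    simp only [Complex.normSq_apply, ← pow_two] at this
    exact this.ne'
  simp only [Complex.mul_re, Complex.mul_im, Complex.sub_re, Complex.sub_im,
    Complex.div_re, Complex.div_im, Complex.ofReal_re, Complex.ofReal_im,
    Complex.I_re, Complex.I_im, Complex.one_re, Complex.one_im,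
    Complex.re_ofNat, Complex.im_ofNat, Complex.normSq_apply, pow_two]
  have h16 : k.re ^ 2 * 16 + k.im ^ 2 * 16 ≠ 0 := by
    intro h; apply hab; nlinarith [sq_nonneg k.re, sq_nonneg k.im]
  ring_nf
  field_simp [h16]
  ring

private lemma re_part2 (t : ℝ) (k : ℂ) (hk2 : k ^ 2 ≠ -1) :
    (2 * Complex.I * (t : ℂ) * (2 * k * (k ^ 2 - 1) / (k ^ 2 + 1) ^ 2)).re
    = 2 * t * k.im *
        (2 * ((k.re ^ 2 + k.im ^ 2) ^ 3 - 2 * (k.re ^ 2 + k.im ^ 2) ^ 2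
              - (3 * k.re ^ 2 - k.im ^ 2) * (1 + k.re ^ 2 + k.im ^ 2)
              - 2 * (k.re ^ 2 + k.im ^ 2) + 1)
            / ((k.re ^ 2 - k.im ^ 2 + 1) ^ 2 + 4 * k.re ^ 2 * k.im ^ 2) ^ 2) := by
  have hD : (k.re ^ 2 - k.im ^ 2 + 1) ^ 2 + 4 * k.re ^ 2 * k.im ^ 2 ≠ 0 := by
    have hne : k ^ 2 + 1 ≠ 0 := fun h => hk2 (by linear_combination h)
    have := Complex.normSq_pos.mpr hne
    simp only [Complex.normSq_apply, Complex.add_re, Complex.add_im, Complex.one_re,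
      Complex.one_im, pow_two, Complex.mul_re, Complex.mul_im] at this
    intro h; nlinarith
  have hD2 : ((k.re ^ 2 - k.im ^ 2 + 1) ^ 2 + 4 * k.re ^ 2 * k.im ^ 2) ^ 2 ≠ 0 :=
    pow_ne_zero 2 hD
  simp only [Complex.mul_re, Complex.mul_im, Complex.sub_re, Complex.sub_im,
    Complex.add_re, Complex.add_im, Complex.div_re, Complex.div_im,
    Complex.I_re, Complex.I_im, Complex.one_re, Complex.one_im,
    Complex.ofReal_re, Complex.ofReal_im,
    Complex.re_ofNat, Complex.im_ofNat, Complex.normSq_apply, pow_two]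
  ring_nf at hD2 ⊢

/-- **Real part of `2itθ` for the 2-mCH phase function.**
With `θ(k,ξ) = ((k²-1)/(4k))ξ - 2k(k²-1)/(k²+1)²`, for all real `t, ξ` and
`k ∈ ℂ` with `k ≠ 0`, `k² ≠ -1`, writing `a = Re k`, `b = Im k`:
`Re(2itθ) = -2tb[ (ξ/4)(1+(a²+b²)⁻¹)
  + 2((a²+b²)³ - 2(a²+b²)² - (3a²-b²)(1+a²+b²) - 2(a²+b²) + 1)
      / ((a²-b²+1)² + 4a²b²)² ]`. -/
theorem re_two_i_t_theta
    (t ξ : ℝ) (k : ℂ) (hk : k ≠ 0) (hk2 : k ^ 2 ≠ -1) :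
    (2 * Complex.I * (t : ℂ) *
        (((k ^ 2 - 1) / (4 * k)) * (ξ : ℂ)
          - 2 * k * (k ^ 2 - 1) / (k ^ 2 + 1) ^ 2)).re
    = -2 * t * k.im *
        (ξ / 4 * (1 + (k.re ^ 2 + k.im ^ 2)⁻¹)
          + 2 * ((k.re ^ 2 + k.im ^ 2) ^ 3 - 2 * (k.re ^ 2 + k.im ^ 2) ^ 2
              - (3 * k.re ^ 2 - k.im ^ 2) * (1 + k.re ^ 2 + k.im ^ 2)
              - 2 * (k.re ^ 2 + k.im ^ 2) + 1)
            / ((k.re ^ 2 - k.im ^ 2 + 1) ^ 2 + 4 * k.re ^ 2 * k.im ^ 2) ^ 2) := by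
  have hsplit : 2 * Complex.I * (t : ℂ) *
        (((k ^ 2 - 1) / (4 * k)) * (ξ : ℂ)
          - 2 * k * (k ^ 2 - 1) / (k ^ 2 + 1) ^ 2)
      = 2 * Complex.I * (t : ℂ) * (((k ^ 2 - 1) / (4 * k)) * (ξ : ℂ))
        - 2 * Complex.I * (t : ℂ) * (2 * k * (k ^ 2 - 1) / (k ^ 2 + 1) ^ 2) := by
    ring
  rw [hsplit, Complex.sub_re, re_part1 t ξ k hk, re_part2 t k hk2]
  ring
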